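/- Alignment is insensitive to finite index: let Γ' ≤ Γ be a finite index subgroup of a countable group Γ acting measure-class-preservingly on (X,m), with continuous Γ-action on B and measurable Γ-equivariant π : X → B. Then (π : (X,m) → B; Γ') is an alignment system if and only if (π : (X,m) → B; Γ) is. -/

import Mathlib

open MeasureTheory

/-- The alignment property: `x ↦ δ_{π x}` is the only (mod `μ`-null sets) measurable
`Λ`-equivariant map from `(X, μ)` to the space of probability measures on `B`. -/
def IsAlignmentSystem (Γ : Type*) {X B : Type*} [Group Γ] [MeasurableSpace X]
    [MeasurableSpace B] [MulAction Γ X] [MulAction Γ B]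
    (μ : Measure X) (π : X → B) : Prop :=
  ∀ p : X → Measure B, Measurable p →
    (∀ x, IsProbabilityMeasure (p x)) →
    (∀ γ : Γ, ∀ᵐ x ∂μ, p (γ • x) = (p x).map (fun b => γ • b)) →
    ∀ᵐ x ∂μ, p x = Measure.dirac (π x)

/-- Extremality of Dirac measures: a probability measure dominated by a multiple of a
Dirac measure equals that Dirac measure. -/
lemma prob_eq_dirac_of_le_smul_dirac {β : Type*} [MeasurableSpace β] (ν : Measure β)
    [IsProbabilityMeasure ν] (b : β) (k : ENNReal)
    (h : ∀ s : Set β, MeasurableSet s → ν s ≤ k * Measure.dirac b s) :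
    ν = Measure.dirac b := by
  ext s hs
  rw [Measure.dirac_apply' b hs]
  by_cases hb : b ∈ s
  · have h1 : ν sᶜ = 0 := by
      have := h sᶜ hs.compl
      rwa [Measure.dirac_apply' b hs.compl, Set.indicator_of_notMem (by simpa using hb),
        mul_zero, nonpos_iff_eq_zero] at this
    have h2 : ν s + ν sᶜ = 1 := by rw [measure_add_measure_compl hs, measure_univ]
    rw [h1, add_zero] at h2
    rw [h2, Set.indicator_of_mem hb]; rfl
  · have := h s hs
    rw [Measure.dirac_apply' b hs, Set.indicator_of_notMem hb, mul_zero,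
      nonpos_iff_eq_zero] at this
    rw [this, Set.indicator_of_notMem hb]

/-- Mapping a finite sum of measures. -/
lemma Measure.map_finsetSum {α β ι : Type*} [MeasurableSpace α] [MeasurableSpace β]
    {f : α → β} (hf : Measurable f) (s : Finset ι) (μ : ι → Measure α) :
    (∑ i ∈ s, μ i).map f = ∑ i ∈ s, (μ i).map f := by
  classical
  induction s using Finset.induction with
  | empty => simp
  | @insert a s h ih =>
    rw [Finset.sum_insert h, Finset.sum_insert h, Measure.map_add _ _ hf, ih]

/-- Alignment is insensitive to finite index: for a finite index subgroup
`Γ' ≤ Γ`, the system `(π : (X, μ) → B)` is an alignment system for `Γ'` if and only if it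
is an alignment system for `Γ`. -/
theorem alignment_finite_index_iff
    {Γ X B : Type*} [Group Γ] [Countable Γ]
    [MeasurableSpace X] [TopologicalSpace B] [MeasurableSpace B] [BorelSpace B]
    [MulAction Γ X] [MulAction Γ B]
    (hmX : ∀ γ : Γ, Measurable (fun x : X => γ • x))
    (hcB : ∀ γ : Γ, Continuous (fun b : B => γ • b))
    (μ : Measure X)
    (hqi : ∀ γ : Γ, μ.map (fun x => γ • x) ≪ μ ∧ μ ≪ μ.map (fun x => γ • x))
    (π : X → B) (hπ : Measurable π)
    (hπeq : ∀ (γ : Γ) (x : X), π (γ • x) = γ • π x)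
    (Γ' : Subgroup Γ) [Γ'.FiniteIndex] :
    IsAlignmentSystem Γ' μ π ↔ IsAlignmentSystem Γ μ π := by
  classical
  -- translation of a.e. statements
  have htrans : ∀ (g : Γ) (P : X → Prop), (∀ᵐ x ∂μ, P x) → ∀ᵐ x ∂μ, P (g • x) := by
    intro g P h
    exact (Measure.tendsto_ae_map (hmX g).aemeasurable).eventually ((hqi g).1.ae_le h)
  constructor
  · -- easy direction: Γ'-alignment implies Γ-alignment
    intro hA p hp hprob heqv
    exact hA p hp hprob (fun γ' => heqv (γ' : Γ))
  · -- hard direction: Γ-alignment implies Γ'-alignment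
    intro hA p hp hprob heqv
    haveI : Fintype (Γ ⧸ Γ') := Fintype.ofFinite _
    set r : Γ ⧸ Γ' → Γ := fun c => Quotient.out c with hrdef
    have hr : ∀ c : Γ ⧸ Γ', ((r c : Γ) : Γ ⧸ Γ') = c := fun c => Quotient.out_eq c
    set k : ENNReal := (Γ'.index : ENNReal) with hkdef
    have hk0 : k ≠ 0 := by
      simp only [hkdef, ne_eq, Nat.cast_eq_zero]
      exact Subgroup.FiniteIndex.index_ne_zero
    have hktop : k ≠ ⊤ := ENNReal.natCast_ne_top _
    set F : Γ ⧸ Γ' → X → Measure B :=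
      fun c x => (p ((r c)⁻¹ • x)).map (fun b => r c • b) with hFdef
    set q : X → Measure B := fun x => k⁻¹ • ∑ c : Γ ⧸ Γ', F c x with hqdef
    -- each F c x is a probability measure
    have hFprob : ∀ c x, IsProbabilityMeasure (F c x) := by
      intro c x
      haveI := hprob ((r c)⁻¹ • x)
      exact Measure.isProbabilityMeasure_map (hcB (r c)).measurable.aemeasurable
    -- q x is a probability measure
    have hqprob : ∀ x, IsProbabilityMeasure (q x) := by
      intro x
      constructor
      have : (∑ c : Γ ⧸ Γ', F c x) Set.univ = k := by
        rw [Measure.finset_sum_apply]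
        have : ∀ c : Γ ⧸ Γ', F c x Set.univ = 1 := fun c => (hFprob c x).measure_univ
        rw [Finset.sum_congr rfl (fun c _ => this c), Finset.sum_const, Finset.card_univ,
          nsmul_eq_mul, mul_one, hkdef, Subgroup.index, Nat.card_eq_fintype_card]
      show (k⁻¹ • ∑ c : Γ ⧸ Γ', F c x) Set.univ = 1
      rw [Measure.smul_apply, this, smul_eq_mul, ENNReal.inv_mul_cancel hk0 hktop]
    -- q is measurable
    have hqmeas : Measurable q := by
      apply Measure.measurable_of_measurable_coe
      intro s hs
      have hrw : (fun x => q x s)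
          = fun x => k⁻¹ * ∑ c : Γ ⧸ Γ', p ((r c)⁻¹ • x) ((fun b => r c • b) ⁻¹' s) := by
        funext x
        show (k⁻¹ • ∑ c : Γ ⧸ Γ', F c x) s = _
        rw [Measure.smul_apply, smul_eq_mul, Measure.finset_sum_apply]
        congr 1
        exact Finset.sum_congr rfl fun c _ =>
          Measure.map_apply (hcB (r c)).measurable hs
      rw [hrw]
      exact (Finset.measurable_sum Finset.univ fun c _ =>
        (Measure.measurable_coe ((hcB (r c)).measurable hs)).comp
          (hp.comp (hmX (r c)⁻¹))).const_mul _
    -- q is Γ-equivariant (a.e.)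
    have hqeqv : ∀ γ : Γ, ∀ᵐ x ∂μ, q (γ • x) = (q x).map (fun b => γ • b) := by
      intro γ
      -- the coset-wise correction elements lie in Γ'
      have hmem : ∀ c : Γ ⧸ Γ', (r (γ • c))⁻¹ * (γ * r c) ∈ Γ' := by
        intro c
        apply QuotientGroup.eq.mp
        rw [hr]
        show γ • c = ((γ * r c : Γ) : Γ ⧸ Γ')
        rw [show ((γ * r c : Γ) : Γ ⧸ Γ') = γ • ((r c : Γ) : Γ ⧸ Γ') from rfl, hr]
      -- a.e. equivariance at the correction elements, translated
      have hae : ∀ᵐ x ∂μ, ∀ c : Γ ⧸ Γ',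
          p (((r (γ • c))⁻¹ * (γ * r c)) • ((r c)⁻¹ • x))
            = (p ((r c)⁻¹ • x)).map (fun b => ((r (γ • c))⁻¹ * (γ * r c)) • b) := by
        rw [ae_all_iff]
        intro c
        exact htrans ((r c)⁻¹) _ (heqv (⟨_, hmem c⟩ : Γ'))
      filter_upwards [hae] with x hx
      -- pointwise computation
      have hterm : ∀ c : Γ ⧸ Γ', F (γ • c) (γ • x) = (F c x).map (fun b => γ • b) := by
        intro c
        show (p ((r (γ • c))⁻¹ • (γ • x))).map (fun b => r (γ • c) • b)
          = ((p ((r c)⁻¹ • x)).map (fun b => r c • b)).map (fun b => γ • b)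
        have h1 : (r (γ • c))⁻¹ • (γ • x)
            = ((r (γ • c))⁻¹ * (γ * r c)) • ((r c)⁻¹ • x) := by
          rw [smul_smul, smul_smul]
          congr 1
          group
        rw [h1, hx c, Measure.map_map (hcB (r (γ • c))).measurable (hcB _).measurable,
          Measure.map_map (hcB γ).measurable (hcB (r c)).measurable]
        congr 1
        funext b
        show r (γ • c) • (((r (γ • c))⁻¹ * (γ * r c)) • b) = γ • (r c • b)
        rw [smul_smul, smul_smul]
        congr 1
        group
      calc q (γ • x) = k⁻¹ • ∑ c : Γ ⧸ Γ', F c (γ • x) := rfl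
        _ = k⁻¹ • ∑ c : Γ ⧸ Γ', F (γ • c) (γ • x) := by
            congr 1
            exact (Equiv.sum_comp (MulAction.toPerm γ) (fun c => F c (γ • x))).symm
        _ = k⁻¹ • ∑ c : Γ ⧸ Γ', (F c x).map (fun b => γ • b) := by
            congr 1; exact Finset.sum_congr rfl fun c _ => hterm c
        _ = (q x).map (fun b => γ • b) := by
            rw [hqdef]
            rw [Measure.map_smul, Measure.map_finsetSum (hcB γ).measurable]
    -- apply Γ-alignment to q
    have hqdirac : ∀ᵐ x ∂μ, q x = Measure.dirac (π x) := hA q hqmeas hqprob hqeqv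
    -- the identity-coset term of q equals p
    set c₀ : Γ ⧸ Γ' := ((1 : Γ) : Γ ⧸ Γ') with hc₀def
    have hmem₀ : r c₀ ∈ Γ' := by
      have := QuotientGroup.eq.mp (hr c₀ : ((r c₀ : Γ) : Γ ⧸ Γ') = ((1 : Γ) : Γ ⧸ Γ'))
      have h2 := Γ'.inv_mem this
      simpa using h2
    have hid : ∀ᵐ x ∂μ, p x = F c₀ x := by
      have h1 := htrans ((r c₀)⁻¹) _ (heqv (⟨r c₀, hmem₀⟩ : Γ'))
      filter_upwards [h1] with x hx
      show p x = (p ((r c₀)⁻¹ • x)).map (fun b => r c₀ • b)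
      have : (r c₀ : Γ) • ((r c₀)⁻¹ • x) = x := smul_inv_smul _ x
      calc p x = p ((r c₀ : Γ) • ((r c₀)⁻¹ • x)) := by rw [this]
        _ = (p ((r c₀)⁻¹ • x)).map (fun b => r c₀ • b) := hx
    -- conclude by extremality of Dirac measures
    filter_upwards [hqdirac, hid] with x hx1 hx2
    haveI := hprob x
    apply prob_eq_dirac_of_le_smul_dirac (p x) (π x) k
    intro s hs
    have hsum : (∑ c : Γ ⧸ Γ', F c x) = k • Measure.dirac (π x) := by
      have := congrArg (fun ν : Measure B => k • ν) hx1
      simpa only [hqdef, smul_smul, ENNReal.mul_inv_cancel hk0 hktop, one_smul] using this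
    calc p x s = F c₀ x s := by rw [hx2]
      _ ≤ ∑ c : Γ ⧸ Γ', F c x s :=
          Finset.single_le_sum (f := fun c => F c x s) (fun c _ => zero_le)
            (Finset.mem_univ c₀)
      _ = (∑ c : Γ ⧸ Γ', F c x) s := (Measure.finset_sum_apply _ _ _).symm
      _ = k * Measure.dirac (π x) s := by rw [hsum]; rfl
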